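/- For n ≥ 3k ≥ 9, every tournament T on n vertices with connectivity k satisfies ss(T) ≤ ⌈n/2⌉. In particular ss_max(T_n^k) ≤ ⌈n/2⌉. -/

import Mathlib

variable {V : Type*}

/-- Reachability inside a vertex subset `S` of the digraph with arc relation `A`. -/
def ReachIn (A : V → V → Prop) (S : Set V) : V → V → Prop :=
  Relation.ReflTransGen (fun u v => u ∈ S ∧ v ∈ S ∧ A u v)

/-- The sub-digraph induced on `S` is strongly connected. -/
def StrongIn (A : V → V → Prop) (S : Set V) : Prop :=
  ∀ u ∈ S, ∀ v ∈ S, ReachIn A S u v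

/-- `M` is a strongly connected component of the sub-digraph induced on `S`. -/
def IsSCCIn (A : V → V → Prop) (S M : Set V) : Prop :=
  ∃ v ∈ S, M = {u | u ∈ S ∧ ReachIn A S u v ∧ ReachIn A S v u}

/-- There is an arc from (some vertex of) `M` to (some vertex of) `N`. -/
def HasArc (A : V → V → Prop) (M N : Set V) : Prop :=
  ∃ u ∈ M, ∃ w ∈ N, A u w

/-- `S` is a safe set of the sub-digraph of `A` induced on `H`. -/
def SafeSetIn (A : V → V → Prop) (H S : Set V) : Prop :=
  S.Nonempty ∧ S ⊆ H ∧
    (∀ M, IsSCCIn A (H \ S) M → ∃ N, IsSCCIn A S N ∧ HasArc A M N) ∧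
    (∀ M N, IsSCCIn A (H \ S) M → IsSCCIn A S N → HasArc A M N → M.ncard ≤ N.ncard)

/-- `S` is a safe set of the digraph with arc relation `A`. -/
def SafeSet (A : V → V → Prop) (S : Set V) : Prop :=
  SafeSetIn A Set.univ S

/-- `S` is a strong safe set: a safe set inducing a strongly connected sub-digraph. -/
def StrongSafeSet (A : V → V → Prop) (S : Set V) : Prop :=
  SafeSet A S ∧ StrongIn A S

/-- A digraph is `k`-strong if it has at least `k+1` vertices and deleting any
fewer than `k` vertices leaves a strongly connected digraph. -/
def KStrong [Fintype V] (A : V → V → Prop) (k : ℕ) : Prop :=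
  k + 1 ≤ Fintype.card V ∧ ∀ X : Set V, X.ncard < k → StrongIn A Xᶜ

/-- An oriented graph: no loops and no 2-cycles. -/
def Oriented (A : V → V → Prop) : Prop :=
  ∀ u v, A u v → ¬ A v u

/-- A tournament: no loops, and exactly one arc between any two distinct vertices. -/
def IsTournament (A : V → V → Prop) : Prop :=
  (∀ v, ¬ A v v) ∧ ∀ u v : V, u ≠ v → (A u v ↔ ¬ A v u)

/-- An acyclic digraph: no arc lies on a directed cycle. -/
def AcyclicDigraph (A : V → V → Prop) : Prop :=
  ∀ u v, A u v → ¬ ReachIn A Set.univ v u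

/-- `S` is in-dominating: every vertex outside `S` has an out-neighbour in `S`. -/
def InDominating (A : V → V → Prop) (S : Set V) : Prop :=
  ∀ v, v ∉ S → ∃ w ∈ S, A v w

/-- An independent set of a digraph: no arc between any two of its vertices. -/
def IndepSet (A : V → V → Prop) (I : Set V) : Prop :=
  ∀ u ∈ I, ∀ v ∈ I, u ≠ v → ¬ A u v

noncomputable def outDeg (A : V → V → Prop) (v : V) : ℕ := {w | A v w}.ncard
noncomputable def inDeg (A : V → V → Prop) (v : V) : ℕ := {w | A w v}.ncard

/-- The safe number: minimum cardinality of a safe set. -/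
noncomputable def safeNum (A : V → V → Prop) : ℕ :=
  sInf {n | ∃ S : Set V, SafeSet A S ∧ S.ncard = n}

/-- The strong safe number: minimum cardinality of a strong safe set. -/
noncomputable def strongSafeNum (A : V → V → Prop) : ℕ :=
  sInf {n | ∃ S : Set V, StrongSafeSet A S ∧ S.ncard = n}

/-- The sub-digraph induced on `S` is acyclic. -/
def AcyclicIn (A : V → V → Prop) (S : Set V) : Prop :=
  ∀ u ∈ S, ∀ v ∈ S, A u v → ¬ ReachIn A S v u



section Chunk1
open Set
variable {A : V → V → Prop}

lemma reachin_mono {S S' : Set V} (h : S ⊆ S') {u v : V} (hr : ReachIn A S u v) :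
    ReachIn A S' u v :=
  Relation.ReflTransGen.mono (p := fun u v => u ∈ S' ∧ v ∈ S' ∧ A u v)
    (by intro a b hab; exact ⟨h hab.1, h hab.2.1, hab.2.2⟩) u v hr

variable (hT : IsTournament A)
include hT

lemma tourn_asymm {u v : V} (huv : A u v) : ¬ A v u := by
  rcases eq_or_ne u v with rfl | hne
  · exact fun _ => hT.1 u huv
  · exact (hT.2 u v hne).mp huv

lemma tourn_total {u v : V} (hne : u ≠ v) : A u v ∨ A v u := by
  by_cases h : A u v
  · exact Or.inl h
  · exact Or.inr ((hT.2 v u hne.symm).mpr h)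

omit hT

lemma reach_stays {Y : Set V} (hclosed : ∀ y ∈ Y, ∀ z, A y z → z ∈ Y) {a b : V}
    (h : ReachIn A Set.univ a b) (ha : a ∈ Y) : b ∈ Y := by
  induction h with
  | refl => exact ha
  | tail _ step ih => exact hclosed _ ih _ step.2.2

lemma no_sink (hstrong : StrongIn A Set.univ) {Y : Set V} (hY : Y.Nonempty)
    (hYc : Yᶜ.Nonempty) (hclosed : ∀ y ∈ Y, ∀ z, A y z → z ∈ Y) : False := by
  obtain ⟨y, hy⟩ := hY; obtain ⟨z, hz⟩ := hYc
  exact hz (reach_stays hclosed (hstrong y trivial z trivial) hy)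

include hT

lemma stuck_lemma (hstrong : StrongIn A Set.univ) {U : Set V} (hU : U.Nonempty)
    (hUc : Uᶜ.Nonempty)
    (hno : ∀ o, o ∉ U → ¬ ((∃ a ∈ U, A a o) ∧ (∃ b ∈ U, A o b))) :
    ∃ r q, r ∉ U ∧ q ∉ U ∧ r ≠ q ∧ (∀ u ∈ U, A u r) ∧ (∀ u ∈ U, A q u) ∧ A r q := by
  classical
  set R : Set V := {o | o ∉ U ∧ ∀ u ∈ U, A u o} with hRdef
  set Q : Set V := {o | o ∉ U ∧ ∀ u ∈ U, A o u} with hQdef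
  have hRQ : ∀ o ∉ U, o ∈ R ∨ o ∈ Q := by
    intro o ho
    by_cases hA : ∃ a ∈ U, A a o
    · left
      refine ⟨ho, fun u hu => ?_⟩
      have hb : ¬ ∃ b ∈ U, A o b := fun hb => hno o ho ⟨hA, hb⟩
      have hne : u ≠ o := fun h => ho (h ▸ hu)
      rcases tourn_total hT hne with h | h
      · exact h
      · exact absurd ⟨u, hu, h⟩ hb
    · right
      refine ⟨ho, fun u hu => ?_⟩
      have hne : o ≠ u := fun h => ho (h ▸ hu)
      rcases tourn_total hT hne with h | h
      · exact h
      · exact absurd ⟨u, hu, h⟩ hA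
  have hRne : R.Nonempty := by
    by_contra hR
    refine no_sink hstrong hU hUc ?_
    intro u hu z hz
    by_contra hzU
    rcases hRQ z hzU with h | h
    · exact hR ⟨z, h⟩
    · exact tourn_asymm hT hz (h.2 u hu)
  have hQne : Q.Nonempty := by
    by_contra hQ
    refine no_sink hstrong hUc (by simpa using hU) ?_
    intro y hy z hz
    rcases hRQ y hy with h | h
    · intro hzU
      exact tourn_asymm hT hz (h.2 z hzU)
    · exact absurd ⟨y, h⟩ hQ
  have harc : ∃ r ∈ R, ∃ q ∈ Q, A r q := by
    by_contra h
    push_neg at h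
    refine no_sink hstrong hRne ?_ ?_
    · obtain ⟨u, hu⟩ := hU
      exact ⟨u, fun hc => hc.1 hu⟩
    · intro r hr z hz
      by_cases hzU : z ∈ U
      · exact absurd hz (tourn_asymm hT (hr.2 z hzU))
      · rcases hRQ z hzU with h' | h'
        · exact h'
        · exact absurd hz (h r hr z h')
  obtain ⟨r, hr, q, hq, hrq⟩ := harc
  have hne : r ≠ q := by
    rintro rfl
    obtain ⟨u, hu⟩ := hU
    exact tourn_asymm hT (hr.2 u hu) (hq.2 u hu)
  exact ⟨r, q, hr.1, hq.1, hne, hr.2, hq.2, hrq⟩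

omit hT

lemma strong_insert {U : Set V} (hU : StrongIn A U) {o a b : V} (ha : a ∈ U) (hb : b ∈ U)
    (hao : A a o) (hob : A o b) : StrongIn A (insert o U) := by
  have hmono : ∀ {x y : V}, ReachIn A U x y → ReachIn A (insert o U) x y :=
    fun h => reachin_mono (subset_insert _ _) h
  intro u hu v hv
  rcases hu with rfl | hu
  · rcases hv with rfl | hv
    · exact Relation.ReflTransGen.refl
    · exact Relation.ReflTransGen.head ⟨mem_insert _ _, Or.inr hb, hob⟩ (hmono (hU b hb v hv))
  · rcases hv with rfl | hv
    · exact Relation.ReflTransGen.tail (hmono (hU u hu a ha)) ⟨Or.inr ha, mem_insert _ _, hao⟩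
    · exact hmono (hU u hu v hv)

lemma strong_hub {W : Set V} (hW : W.Nonempty) {r q : V} (hr : r ∉ W) (hq : q ∉ W)
    (hrq : r ≠ q) (h1 : ∀ u ∈ W, A u r) (h2 : ∀ u ∈ W, A q u) (h3 : A r q) :
    StrongIn A (insert r (insert q W)) := by
  set U' := insert r (insert q W) with hU'
  have hrU : r ∈ U' := mem_insert _ _
  have hqU : q ∈ U' := Or.inr (mem_insert _ _)
  have hWU : ∀ {x : V}, x ∈ W → x ∈ U' := fun hx => Or.inr (Or.inr hx)
  obtain ⟨w₀, hw₀⟩ := hW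
  have toR : ∀ x ∈ U', ReachIn A U' x r := by
    intro x hx
    rcases hx with rfl | hx
    · exact Relation.ReflTransGen.refl
    · rcases hx with rfl | hx
      · exact Relation.ReflTransGen.head ⟨hqU, hWU hw₀, h2 w₀ hw₀⟩
          (Relation.ReflTransGen.single ⟨hWU hw₀, hrU, h1 w₀ hw₀⟩)
      · exact Relation.ReflTransGen.single ⟨hWU hx, hrU, h1 x hx⟩
  have fromR : ∀ y ∈ U', ReachIn A U' r y := by
    intro y hy
    rcases hy with rfl | hy
    · exact Relation.ReflTransGen.refl
    · rcases hy with rfl | hy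
      · exact Relation.ReflTransGen.single ⟨hrU, hqU, h3⟩
      · exact Relation.ReflTransGen.head ⟨hrU, hqU, h3⟩
          (Relation.ReflTransGen.single ⟨hqU, hWU hy, h2 y hy⟩)
  intro u hu v hv
  exact (toR u hu).trans (fromR v hv)

end Chunk1

section Chunk2
open Set
variable [Fintype V] {A : V → V → Prop}

lemma growStrong (hT : IsTournament A) (hstrong : StrongIn A Set.univ) (m : ℕ)
    (hm : 3 ≤ m) (hmn : m ≤ Fintype.card V) :
    ∀ j (U E : Set V), StrongIn A U → E ⊆ U → E.ncard < U.ncard → U.ncard + j = m →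
    ∃ S : Set V, StrongIn A S ∧ E ⊆ S ∧ S.ncard = m := by
  intro j
  induction j using Nat.strong_induction_on with
  | _ j ih =>
  intro U E hU hE hlt hcard
  rcases Nat.eq_zero_or_pos j with rfl | hjpos
  · exact ⟨U, hU, hE, by simpa using hcard⟩
  have hUne : U.Nonempty := nonempty_of_ncard_ne_zero (by omega)
  have hUcne : Uᶜ.Nonempty := by
    rw [nonempty_compl]
    intro h
    rw [h, ncard_univ, Nat.card_eq_fintype_card] at hcard
    omega
  by_cases hins : ∃ o, o ∉ U ∧ (∃ a ∈ U, A a o) ∧ (∃ b ∈ U, A o b)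
  · obtain ⟨o, ho, ⟨a, ha, hao⟩, ⟨b, hb, hob⟩⟩ := hins
    have hcardU : (insert o U).ncard = U.ncard + 1 := ncard_insert_of_notMem ho
    refine ih (j - 1) (by omega) (insert o U) E (strong_insert hU ha hb hao hob)
      (hE.trans (subset_insert _ _)) (by omega) (by omega)
  · push_neg at hins
    obtain ⟨r, q, hrU, hqU, hrq, h1, h2, h3⟩ :=
      stuck_lemma hT hstrong hUne hUcne (fun o ho hc => absurd hc.2 (by simpa using hins o ho hc.1))
    rcases Nat.lt_or_ge j 2 with hj1 | hj2
    · -- j = 1 : add r,q, remove some x ∈ U \ E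
      have hxE : ∃ x ∈ U, x ∉ E := by
        by_contra h
        push_neg at h
        exact absurd (ncard_le_ncard h (toFinite E)) (by omega)
      obtain ⟨x, hxU, hxE⟩ := hxE
      set W := U \ {x} with hW
      have hWcard : W.ncard = U.ncard - 1 := ncard_diff_singleton_of_mem hxU
      have hWne : W.Nonempty := nonempty_of_ncard_ne_zero (by omega)
      have hrW : r ∉ W := fun h => hrU h.1
      have hqW : q ∉ W := fun h => hqU h.1
      have hstr : StrongIn A (insert r (insert q W)) :=
        strong_hub hWne hrW hqW hrq (fun u hu => h1 u hu.1) (fun u hu => h2 u hu.1) h3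
      refine ⟨insert r (insert q W), hstr, ?_, ?_⟩
      · intro e he
        exact Or.inr (Or.inr ⟨hE he, fun hx => hxE (hx ▸ he)⟩)
      · have c1 : (insert q W).ncard = W.ncard + 1 := ncard_insert_of_notMem hqW
        have c2 : (insert r (insert q W)).ncard = (insert q W).ncard + 1 :=
          ncard_insert_of_notMem (by
            rintro (rfl | h)
            · exact hrq rfl
            · exact hrW h)
        omega
    · -- j ≥ 2 : add r, q
      have hqi : q ∉ U := hqU
      have hstr : StrongIn A (insert r (insert q U)) := strong_hub hUne hrU hqU hrq h1 h2 h3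
      have c1 : (insert q U).ncard = U.ncard + 1 := ncard_insert_of_notMem hqU
      have c2 : (insert r (insert q U)).ncard = (insert q U).ncard + 1 :=
        ncard_insert_of_notMem (by
          rintro (rfl | h)
          · exact hrq rfl
          · exact hrU h)
      refine ih (j - 2) (by omega) _ E hstr
        (hE.trans ((subset_insert _ _).trans (subset_insert _ _))) (by omega) (by omega)

end Chunk2

section Chunk3
open Set List
variable {A : V → V → Prop}

def IsCyc (A : V → V → Prop) (l : List V) : Prop :=
  3 ≤ l.length ∧ l.Nodup ∧ l.Chain' A ∧ ∀ x ∈ l.getLast?, ∀ y ∈ l.head?, A x y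

lemma IsCyc.ne_nil {l : List V} (h : IsCyc A l) : l ≠ [] := by
  intro hl
  have h1 := h.1
  rw [hl] at h1
  simp at h1

lemma last?_spec {l : List V} {x : V} (hne : l ≠ []) (hx : x ∈ l.getLast?) :
    x = l.getLast hne := by
  rw [getLast?_eq_getLast hne, Option.mem_some_iff] at hx; exact hx.symm

lemma head?_spec {l : List V} {x : V} (hne : l ≠ []) (hx : x ∈ l.head?) :
    x = l.head hne := by
  rw [head?_eq_head hne, Option.mem_some_iff] at hx; exact hx.symm

lemma last?_intro {l : List V} (hne : l ≠ []) : l.getLast hne ∈ l.getLast? := by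
  rw [getLast?_eq_getLast hne]; rfl

lemma head?_intro {l : List V} (hne : l ≠ []) : l.head hne ∈ l.head? := by
  rw [head?_eq_head hne]; rfl

lemma IsCyc.wrap {l : List V} (h : IsCyc A l) (hne : l ≠ []) :
    A (l.getLast hne) (l.head hne) :=
  h.2.2.2 _ (last?_intro hne) _ (head?_intro hne)

lemma chain_reach_head : ∀ (l : List V) (S : Set V), l.Chain' A → (∀ x ∈ l, x ∈ S) →
    ∀ hne : l ≠ [], ∀ x ∈ l, ReachIn A S (l.head hne) x := by
  intro l
  induction l with
  | nil => intro S _ _ hne; exact absurd rfl hne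
  | cons a t ih =>
    intro S hch hsub hne x hx
    rw [mem_cons] at hx
    rcases hx with rfl | hx
    · exact Relation.ReflTransGen.refl
    · cases t with
      | nil => simp at hx
      | cons b t' =>
        have harc : A a b := (isChain_cons_cons.mp hch).1
        refine Relation.ReflTransGen.head ⟨hsub a (by simp), hsub b (by simp), harc⟩ ?_
        exact ih S (isChain_cons_cons.mp hch).2 (fun y hy => hsub y (by simp [hy])) (by simp) x hx

lemma chain_reach_last : ∀ (l : List V) (S : Set V), l.Chain' A → (∀ x ∈ l, x ∈ S) →
    ∀ hne : l ≠ [], ∀ x ∈ l, ReachIn A S x (l.getLast hne) := by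
  intro l
  induction l with
  | nil => intro S _ _ hne; exact absurd rfl hne
  | cons a t ih =>
    intro S hch hsub hne x hx
    cases t with
    | nil =>
      rw [List.mem_singleton] at hx
      rw [hx]
      exact Relation.ReflTransGen.refl
    | cons b t' =>
      have harc : A a b := (isChain_cons_cons.mp hch).1
      have hsub' : ∀ y ∈ b :: t', y ∈ S := fun y hy => hsub y (by simp [hy])
      have hlast : (a :: b :: t').getLast hne = (b :: t').getLast (by simp) :=
        getLast_cons (by simp)
      rw [hlast]
      rw [mem_cons] at hx
      rcases hx with rfl | hx
      · exact Relation.ReflTransGen.head ⟨hsub x (by simp), hsub b (by simp), harc⟩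
          (ih S (isChain_cons_cons.mp hch).2 hsub' (by simp) b (by simp))
      · exact ih S (isChain_cons_cons.mp hch).2 hsub' (by simp) x hx

lemma cyc_strong {l : List V} (h : IsCyc A l) : StrongIn A {x | x ∈ l} := by
  have hne := h.ne_nil
  intro u hu v hv
  have hsub : ∀ x ∈ l, x ∈ {x | x ∈ l} := fun x hx => hx
  refine (chain_reach_last l _ h.2.2.1 hsub hne u hu).trans ?_
  refine Relation.ReflTransGen.head ⟨getLast_mem hne, head_mem hne, h.wrap hne⟩ ?_
  exact chain_reach_head l _ h.2.2.1 hsub hne v hv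

lemma cyc_ncard {l : List V} (h : IsCyc A l) : {x | x ∈ l}.ncard = l.length := by
  classical
  have he : {x | x ∈ l} = ↑l.toFinset := by ext x; simp
  rw [he, ncard_coe_finset, List.toFinset_card_of_nodup h.2.1]

lemma cyc_build {l₁ lnew : List V} (h₁ : l₁ ≠ []) (h₂ : lnew ≠ [])
    (hnd : (l₁ ++ lnew).Nodup) (hlen : 3 ≤ (l₁ ++ lnew).length)
    (hc1 : l₁.Chain' A) (hc2 : lnew.Chain' A)
    (ha : A (l₁.getLast h₁) (lnew.head h₂)) (hb : A (lnew.getLast h₂) (l₁.head h₁)) :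
    IsCyc A (l₁ ++ lnew) := by
  refine ⟨hlen, hnd, ?_, ?_⟩
  · unfold List.Chain'; rw [isChain_append]
    refine ⟨hc1, hc2, fun x hx y hy => ?_⟩
    rw [last?_spec h₁ hx, head?_spec h₂ hy]
    exact ha
  · intro x hx y hy
    rw [getLast?_append, getLast?_eq_getLast h₂] at hx
    rw [head?_append, head?_eq_head h₁] at hy
    simp at hx hy
    rw [← hx, ← hy]
    exact hb

lemma cyc_rotate' {p q : List V} {v : V} (h : IsCyc A (p ++ v :: q)) (hp : p ≠ []) :
    IsCyc A ((v :: q) ++ p) ∧ ((v :: q) ++ p).Perm (p ++ v :: q) := by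
  have hperm : ((v :: q) ++ p).Perm (p ++ v :: q) := by
    calc (v :: q) ++ p = v :: (q ++ p) := by simp
    _ ~ v :: (p ++ q) := Perm.cons v perm_append_comm
    _ ~ p ++ v :: q := perm_middle.symm
  obtain ⟨hlen, hnd, hch, hwrap⟩ := h
  unfold List.Chain' at hch; rw [isChain_append] at hch
  obtain ⟨hcp, hcvq, hlink⟩ := hch
  have harc_pv : A (p.getLast hp) v := hlink _ (last?_intro hp) v rfl
  have hbw : A ((v :: q).getLast (by simp)) (p.head hp) := by
    refine hwrap _ ?_ _ ?_
    · rw [getLast?_append, getLast?_eq_getLast (l := v :: q) (by simp)]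
      simp
    · rw [head?_append, head?_eq_head hp]
      simp
  refine ⟨cyc_build (by simp) hp ((hperm.nodup_iff).mpr hnd)
    (by rw [hperm.length_eq]; exact hlen) hcvq hcp hbw ?_, hperm⟩
  simpa [head_cons] using harc_pv

lemma find_switch {o : V} : ∀ (t : List V) (x : V), (x :: t).Chain' A → A x o →
    (∀ c ∈ x :: t, A c o ∨ A o c) → (∃ b ∈ t, A o b) →
    ∃ p u v s, x :: t = p ++ u :: v :: s ∧ A u o ∧ A o v := by
  intro t
  induction t with
  | nil => intro x _ _ _ hb; simp at hb
  | cons y t' ih =>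
    intro x hch hxo htot hb
    by_cases hoy : A o y
    · exact ⟨[], x, y, t', by simp, hxo, hoy⟩
    · have hyo : A y o := by
        rcases htot y (by simp) with h | h
        · exact h
        · exact absurd h hoy
      obtain ⟨b, hbm, hob⟩ := hb
      rw [mem_cons] at hbm
      have hbt' : b ∈ t' := by
        rcases hbm with rfl | h
        · exact absurd hob hoy
        · exact h
      obtain ⟨p', u, v, s, hdec, hu, hv⟩ :=
        ih y (isChain_cons_cons.mp hch).2 hyo (fun c hc => htot c (by simp [mem_cons] at hc ⊢; tauto))
          ⟨b, hbt', hob⟩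
      exact ⟨x :: p', u, v, s, by rw [cons_append, hdec], hu, hv⟩

end Chunk3

section Chunk4
open Set List
variable [Fintype V] {A : V → V → Prop}

lemma cyc_rotate {l : List V} (h : IsCyc A l) {v : V} (hv : v ∈ l) :
    ∃ t, IsCyc A (v :: t) ∧ (v :: t).Perm l := by
  obtain ⟨p, q, rfl⟩ := List.append_of_mem hv
  cases p with
  | nil => exact ⟨q, by simpa using h, by simp⟩
  | cons c p' =>
    obtain ⟨h1, h2⟩ := cyc_rotate' h (by simp)
    exact ⟨q ++ c :: p', by simpa using h1, by simpa using h2⟩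

lemma growCycle (hT : IsTournament A) (hstrong : StrongIn A Set.univ) (m : ℕ)
    (hm : 3 ≤ m) (hmn : m ≤ Fintype.card V) :
    ∀ j (l : List V), IsCyc A l → l.length + j = m →
    ∃ l', IsCyc A l' ∧ l'.length = m := by
  intro j
  induction j using Nat.strong_induction_on with
  | _ j ih =>
  intro l hcyc hcard
  rcases Nat.eq_zero_or_pos j with rfl | hjpos
  · exact ⟨l, hcyc, by omega⟩
  set U : Set V := {x | x ∈ l} with hUdef
  have hUcard : U.ncard = l.length := cyc_ncard hcyc
  have hlne : l ≠ [] := hcyc.ne_nil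
  have hUne : U.Nonempty := ⟨l.head hlne, head_mem hlne⟩
  have hUcne : Uᶜ.Nonempty := by
    rw [nonempty_compl]
    intro h
    rw [h, ncard_univ, Nat.card_eq_fintype_card] at hUcard
    omega
  by_cases hins : ∃ o, o ∉ U ∧ (∃ a ∈ U, A a o) ∧ (∃ b ∈ U, A o b)
  · obtain ⟨o, ho, ⟨a, ha, hao⟩, ⟨b, hb, hob⟩⟩ := hins
    obtain ⟨t₀, h₀, hperm₀⟩ := cyc_rotate hcyc ha
    have hmem₀ : ∀ {x : V}, x ∈ a :: t₀ ↔ x ∈ l := fun {x} => hperm₀.mem_iff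
    have htot : ∀ c ∈ a :: t₀, A c o ∨ A o c := by
      intro c hc
      have hco : c ≠ o := fun h => ho (h ▸ (hmem₀.mp hc))
      exact tourn_total hT hco
    have hbt : ∃ b' ∈ t₀, A o b' := by
      refine ⟨b, ?_, hob⟩
      have hbl : b ∈ a :: t₀ := hmem₀.mpr hb
      rw [mem_cons] at hbl
      rcases hbl with rfl | hbl
      · exact absurd hob (tourn_asymm hT hao)
      · exact hbl
    obtain ⟨p, u, v, s, hdec, hu, hv⟩ := find_switch t₀ a h₀.2.2.1 hao htot hbt
    have hdec' : a :: t₀ = (p ++ [u]) ++ v :: s := by rw [hdec]; simp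
    rw [hdec'] at h₀ hperm₀
    obtain ⟨h₁, hperm₁⟩ := cyc_rotate' h₀ (by simp)
    have hpermL : ((v :: s) ++ (p ++ [u])).Perm l := hperm₁.trans hperm₀
    have hrotne : (v :: s) ++ (p ++ [u]) ≠ [] := by simp
    have honl : o ∉ (v :: s) ++ (p ++ [u]) := fun hc => ho (hpermL.mem_iff.mp hc)
    have hglast : ((v :: s) ++ (p ++ [u])).getLast hrotne = u := by
      rw [getLast_append]
      simp
    have hnewcyc : IsCyc A (((v :: s) ++ (p ++ [u])) ++ [o]) := by
      refine cyc_build hrotne (by simp) ?_ ?_ h₁.2.2.1 (List.IsChain.singleton _) ?_ ?_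
      · rw [nodup_append, ← List.disjoint_iff_ne]
        refine ⟨h₁.2.1, by simp, ?_⟩
        intro x hx hx'
        rw [List.mem_singleton] at hx'
        exact honl (hx' ▸ hx)
      · rw [length_append, hpermL.length_eq]
        have := hcyc.1
        simp only [length_cons, length_nil]
        omega
      · rw [hglast]
        simpa using hu
      · have hhd : ((v :: s) ++ (p ++ [u])).head hrotne = v := by
          rw [head_append_of_ne_nil (by simp)]
          rfl
        rw [hhd]
        simpa using hv
    refine ih (j - 1) (by omega) _ hnewcyc ?_
    rw [length_append, hpermL.length_eq]
    simp only [length_cons, length_nil]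
    omega
  · push_neg at hins
    obtain ⟨r, q, hrU, hqU, hrq, h1, h2, h3⟩ :=
      stuck_lemma hT hstrong hUne hUcne
        (fun o ho hc => absurd hc.2 (by simpa using hins o ho hc.1))
    rcases Nat.lt_or_ge j 2 with hj1 | hj2
    · -- j = 1 : replace last vertex by r, q
      set l₁ := l.dropLast with hl₁def
      have hl₁len : l₁.length = l.length - 1 := length_dropLast
      have hl₁ne : l₁ ≠ [] := ne_nil_of_length_pos (by have := hcyc.1; omega)
      have hsubl : ∀ {x : V}, x ∈ l₁ → x ∈ U := fun hx => dropLast_subset l hx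
      have hnewcyc : IsCyc A (l₁ ++ [r, q]) := by
        refine cyc_build hl₁ne (by simp) ?_ ?_ (hcyc.2.2.1.prefix (dropLast_prefix l))
          (isChain_pair.mpr h3) ?_ ?_
        · rw [nodup_append, ← List.disjoint_iff_ne]
          refine ⟨hcyc.2.1.sublist (dropLast_prefix l).sublist, by simp [hrq], ?_⟩
          intro x hx hx'
          simp only [List.mem_cons, List.mem_singleton, List.not_mem_nil, or_false] at hx'
          rcases hx' with rfl | rfl
          · exact hrU (hsubl hx)
          · exact hqU (hsubl hx)
        · simp only [length_append]
          have := hcyc.1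
          simp only [length_cons, length_nil]
          omega
        · exact h1 _ (hsubl (getLast_mem hl₁ne))
        · have : ([r, q].getLast (by simp)) = q := rfl
          rw [this]
          exact h2 _ (hsubl (head_mem hl₁ne))
      refine ⟨_, hnewcyc, ?_⟩
      simp only [length_append, length_cons, length_nil]
      omega
    · -- j ≥ 2 : append r, q
      have hnewcyc : IsCyc A (l ++ [r, q]) := by
        refine cyc_build hlne (by simp) ?_ ?_ hcyc.2.2.1 (isChain_pair.mpr h3) ?_ ?_
        · rw [nodup_append, ← List.disjoint_iff_ne]
          refine ⟨hcyc.2.1, by simp [hrq], ?_⟩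
          intro x hx hx'
          simp only [List.mem_cons, List.mem_singleton, List.not_mem_nil, or_false] at hx'
          rcases hx' with rfl | rfl
          · exact hrU hx
          · exact hqU hx
        · simp only [length_append]
          have := hcyc.1
          omega
        · exact h1 _ (getLast_mem hlne)
        · have : ([r, q].getLast (by simp)) = q := rfl
          rw [this]
          exact h2 _ (head_mem hlne)
      refine ih (j - 2) (by omega) _ hnewcyc ?_
      simp only [length_append, length_cons, length_nil]
      omega

end Chunk4

section Chunk5
open Set
variable [Fintype V] {A : V → V → Prop}

lemma assemble (hT : IsTournament A) {S : Set V} {n m : ℕ}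
    (hn : Fintype.card V = n) (hS : StrongIn A S) (hcard : S.ncard = m)
    (hmpos : 1 ≤ m) (hm2 : n - m ≤ m)
    (habs : ∀ v₀, v₀ ∉ S → ∃ s ∈ S, A v₀ s) : StrongSafeSet A S := by
  have hSne : S.Nonempty := nonempty_of_ncard_ne_zero (by omega)
  obtain ⟨s₀, hs₀⟩ := hSne
  have hSeq : ∀ w ∈ S, S = {u | u ∈ S ∧ ReachIn A S u w ∧ ReachIn A S w u} := by
    intro w hw
    ext u
    constructor
    · intro hu
      exact ⟨hu, hS u hu w hw, hS w hw u hu⟩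
    · intro hu
      exact hu.1
  have hSCC : IsSCCIn A S S := ⟨s₀, hs₀, hSeq s₀ hs₀⟩
  refine ⟨⟨⟨s₀, hs₀⟩, subset_univ S, ?_, ?_⟩, hS⟩
  · intro M hM
    obtain ⟨v₀, hv₀, hMeq⟩ := hM
    have hv₀M : v₀ ∈ M := by
      rw [hMeq]
      exact ⟨hv₀, Relation.ReflTransGen.refl, Relation.ReflTransGen.refl⟩
    have hv₀S : v₀ ∉ S := hv₀.2
    obtain ⟨s, hs, harc⟩ := habs v₀ hv₀S
    exact ⟨S, hSCC, v₀, hv₀M, s, hs, harc⟩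
  · intro M N hM hN _
    obtain ⟨w, hw, hNeq⟩ := hN
    have hNS : N = S := by rw [hNeq, ← hSeq w hw]
    have hMsub : M ⊆ Set.univ \ S := by
      obtain ⟨v₀, hv₀, hMeq⟩ := hM
      rw [hMeq]
      exact fun u hu => hu.1
    have h1 : M.ncard ≤ (Set.univ \ S).ncard := ncard_le_ncard hMsub (toFinite _)
    have h2 : (Set.univ \ S).ncard = n - m := by
      have := Set.ncard_add_ncard_compl S
      rw [Nat.card_eq_fintype_card, hn, hcard] at this
      have hd : Set.univ \ S = Sᶜ := (Set.compl_eq_univ_diff S).symm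
      rw [hd]
      omega
    rw [hNS, hcard]
    omega

end Chunk5

section Chunk6
open Set
variable [Fintype V] {A : V → V → Prop}

omit [Fintype V] in
lemma reachin_endpoint {S : Set V} {a b : V} (h : ReachIn A S a b) : a = b ∨ b ∈ S := by
  induction h with
  | refl => exact Or.inl rfl
  | tail _ step _ => exact Or.inr step.2.1

lemma caseB (hT : IsTournament A) (hstrong : StrongIn A Set.univ) {n m : ℕ}
    (hn : Fintype.card V = n) (hm3 : 3 ≤ m) (hmn : m ≤ n)
    {w : V} (hw : n + 1 - m ≤ ({x | A x w}).ncard) :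
    ∃ S : Set V, StrongIn A S ∧ S.ncard = m ∧ ∀ v₀, v₀ ∉ S → ∃ s ∈ S, A v₀ s := by
  classical
  set P : Set V := {x | A w x} with hPdef
  set NW : Set V := {x | A x w} with hNWdef
  have hwP : w ∉ P := fun h => hT.1 w h
  have hwN : w ∉ NW := fun h => hT.1 w h
  have hdisj : Disjoint P NW := by
    rw [Set.disjoint_left]
    intro x hx hx'
    exact tourn_asymm hT hx hx'
  have huniv : insert w (P ∪ NW) = Set.univ := by
    ext x
    simp only [mem_univ, iff_true]
    rcases eq_or_ne x w with rfl | hne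
    · exact mem_insert _ _
    · rcases tourn_total hT hne.symm with h | h
      · exact Or.inr (Or.inl h)
      · exact Or.inr (Or.inr h)
  have hcards : P.ncard + NW.ncard + 1 = n := by
    have h1 : (P ∪ NW).ncard = P.ncard + NW.ncard := ncard_union_eq hdisj
    have h2 : (insert w (P ∪ NW)).ncard = (P ∪ NW).ncard + 1 :=
      ncard_insert_of_notMem (by simp [hwP, hwN])
    rw [huniv, ncard_univ, Nat.card_eq_fintype_card, hn] at h2
    omega
  have hPne : P.Nonempty := by
    rcases P.eq_empty_or_nonempty with hemp | hne
    · exfalso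
      obtain ⟨x, hxw⟩ := Fintype.exists_ne_of_one_lt_card (by omega) w
      refine no_sink hstrong (Y := ({w} : Set V)) ⟨w, rfl⟩ ⟨x, by simpa using hxw⟩ ?_
      intro y hy z hz
      rw [mem_singleton_iff] at hy
      subst hy
      exact absurd (show z ∈ P from hz) (by rw [hemp]; exact notMem_empty z)
    · exact hne
  obtain ⟨xs, hxsP, hmax⟩ :=
    Set.exists_max_image P (fun x => ({y ∈ P | A y x}).ncard) (toFinite P) hPne
  have hking : ∀ x ∈ P, ReachIn A P x xs := by
    intro x hx
    rcases eq_or_ne x xs with rfl | hne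
    · exact Relation.ReflTransGen.refl
    · rcases tourn_total hT hne with hxx | hx'x
      · exact Relation.ReflTransGen.single ⟨hx, hxsP, hxx⟩
      · by_contra hno
        have hsub : insert xs {y ∈ P | A y xs} ⊆ {y ∈ P | A y x} := by
          rintro z (rfl | ⟨hzP, hzxs⟩)
          · exact ⟨hxsP, hx'x⟩
          · refine ⟨hzP, ?_⟩
            have hzx : z ≠ x := by
              rintro rfl
              exact absurd hzxs (tourn_asymm hT hx'x)
            rcases tourn_total hT hzx with h | h
            · exact h
            · exact absurd (Relation.ReflTransGen.head ⟨hx, hzP, h⟩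
                (Relation.ReflTransGen.single ⟨hzP, hxsP, hzxs⟩)) hno
        have hxsnot : xs ∉ {y ∈ P | A y xs} := fun h => hT.1 xs h.2
        have hc1 : (insert xs {y ∈ P | A y xs}).ncard = ({y ∈ P | A y xs}).ncard + 1 :=
          ncard_insert_of_notMem hxsnot
        have hc2 := ncard_le_ncard hsub (toFinite _)
        have hc3 := hmax x hx
        omega
  have hgy : ∃ g y₀, A g w ∧ ReachIn A P xs y₀ ∧ A y₀ g := by
    by_contra hno
    push_neg at hno
    refine no_sink hstrong (Y := {p ∈ P | ReachIn A P xs p})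
      ⟨xs, hxsP, Relation.ReflTransGen.refl⟩ ⟨w, fun h => hwP h.1⟩ ?_
    intro y hy z hz
    have hzw : z ≠ w := by
      intro h
      have hwy : A w y := hy.1
      rw [h] at hz
      exact tourn_asymm hT hwy hz
    rcases tourn_total hT hzw.symm with h | h
    · exact ⟨h, hy.2.tail ⟨hy.1, h, hz⟩⟩
    · exact absurd hz (hno z y h hy.2)
  obtain ⟨g, y₀, hgw, hreach, hy₀g⟩ := hgy
  have hgP : g ∉ P := fun h => tourn_asymm hT h hgw
  have hgw' : g ≠ w := fun h => hT.1 w (h ▸ hgw)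
  have hy₀P : y₀ ∈ P := by
    rcases reachin_endpoint hreach with rfl | h
    · exact hxsP
    · exact h
  set U₀ : Set V := insert w (insert g P) with hU₀def
  have hPU₀ : P ⊆ U₀ := fun x hx => Or.inr (Or.inr hx)
  have hgU₀ : g ∈ U₀ := Or.inr (mem_insert _ _)
  have hwU₀ : w ∈ U₀ := mem_insert _ _
  have hreachg : ∀ x ∈ P, ReachIn A (insert g P) x g := by
    intro x hx
    have hsub : P ⊆ insert g P := subset_insert _ _
    exact ((reachin_mono hsub (hking x hx)).trans (reachin_mono hsub hreach)).tail
      ⟨Or.inr hy₀P, mem_insert _ _, hy₀g⟩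
  have hU₀strong : StrongIn A U₀ := by
    have hsub2 : insert g P ⊆ U₀ := subset_insert _ _
    have toW : ∀ x ∈ U₀, ReachIn A U₀ x w := by
      rintro x (rfl | rfl | hx)
      · exact Relation.ReflTransGen.refl
      · exact Relation.ReflTransGen.single ⟨hgU₀, hwU₀, hgw⟩
      · exact (reachin_mono hsub2 (hreachg x hx)).tail ⟨hgU₀, hwU₀, hgw⟩
    have fromW : ∀ x ∈ U₀, ReachIn A U₀ w x := by
      rintro x (rfl | rfl | hx)
      · exact Relation.ReflTransGen.refl
      · exact Relation.ReflTransGen.head ⟨hwU₀, hPU₀ hxsP, show A w xs from hxsP⟩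
          (reachin_mono hsub2 (hreachg xs hxsP))
      · exact Relation.ReflTransGen.single ⟨hwU₀, hPU₀ hx, show A w x from hx⟩
    intro u hu v hv
    exact (toW u hu).trans (fromW v hv)
  have hcU1 : (insert g P).ncard = P.ncard + 1 := ncard_insert_of_notMem hgP
  have hcU0 : U₀.ncard = P.ncard + 2 := by
    rw [hU₀def, ncard_insert_of_notMem (by
      rintro (rfl | h)
      · exact hgw' rfl
      · exact hwP h), hcU1]
  set E : Set V := insert w P with hEdef
  have hcE : E.ncard = P.ncard + 1 := ncard_insert_of_notMem hwP
  have hEU₀ : E ⊆ U₀ := insert_subset hwU₀ hPU₀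
  have hU₀m : U₀.ncard ≤ m := by omega
  obtain ⟨S, hSstr, hES, hScard⟩ := growStrong hT hstrong m hm3 (by omega)
    (m - U₀.ncard) U₀ E hU₀strong hEU₀ (by omega) (by omega)
  refine ⟨S, hSstr, hScard, ?_⟩
  intro v₀ hv₀S
  have hv₀w : v₀ ≠ w := fun h => hv₀S (h ▸ hES (mem_insert _ _))
  have hv₀P : v₀ ∉ P := fun h => hv₀S (hES (Or.inr h))
  rcases tourn_total hT hv₀w with h | h
  · exact ⟨w, hES (mem_insert _ _), h⟩
  · exact absurd (show v₀ ∈ P from h) hv₀P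

end Chunk6

section Chunk7
open Set List
variable [Fintype V] {A : V → V → Prop}

lemma caseC (hT : IsTournament A) (hstrong : StrongIn A Set.univ) {n m : ℕ}
    (hn : Fintype.card V = n) (hm3 : 3 ≤ m) (hmn : m ≤ n)
    (hdeg : ∀ v : V, ({x | A x v}).ncard ≤ m) :
    ∃ S : Set V, StrongIn A S ∧ S.ncard = m ∧ ∀ v₀, v₀ ∉ S → ∃ s ∈ S, A v₀ s := by
  classical
  have key : ∀ S : Set V, S.ncard = m → (∀ z, z ∉ S → {x | A x z} ≠ S) →
      (∀ v₀, v₀ ∉ S → ∃ s ∈ S, A v₀ s) := by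
    intro S hcard hgood v₀ hv₀
    by_contra hno
    push_neg at hno
    have hsub : S ⊆ {x | A x v₀} := by
      intro s hs
      have hne : s ≠ v₀ := fun h => hv₀ (h ▸ hs)
      rcases tourn_total hT hne with h | h
      · exact h
      · exact absurd h (hno s hs)
    have heq : {x | A x v₀} = S :=
      (eq_of_subset_of_ncard_le hsub (by rw [hcard]; exact hdeg v₀) (toFinite _)).symm
    exact hgood v₀ hv₀ heq
  -- build a 3-cycle
  have hVpos : 0 < Fintype.card V := by omega
  have hVne : Nonempty V := Fintype.card_pos_iff.mp hVpos
  obtain ⟨v₀⟩ := hVne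
  have hin : ∃ b, A b v₀ := by
    by_contra h
    push_neg at h
    obtain ⟨x, hx⟩ := Fintype.exists_ne_of_one_lt_card (by omega) v₀
    refine no_sink hstrong (Y := ({v₀}ᶜ : Set V)) ⟨x, by simpa using hx⟩
      ⟨v₀, by simp⟩ ?_
    intro y _ z hz
    intro hzc
    rw [mem_singleton_iff] at hzc
    exact h y (hzc ▸ hz)
  obtain ⟨b₀, hb₀⟩ := hin
  have harc : ∃ a b, A v₀ a ∧ A a b ∧ A b v₀ := by
    by_contra h
    push_neg at h
    refine no_sink hstrong (Y := insert v₀ {x | A v₀ x}) ⟨v₀, mem_insert _ _⟩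
      ⟨b₀, ?_⟩ ?_
    · rintro (rfl | hc)
      · exact hT.1 b₀ hb₀
      · exact tourn_asymm hT hc hb₀
    · rintro y (rfl | hy) z hz
      · exact Or.inr hz
      · rcases eq_or_ne z y with rfl | hzy
        · exact absurd hz (hT.1 z)
        · rcases eq_or_ne z v₀ with rfl | hzv
          · exact absurd hz (tourn_asymm hT hy)
          · rcases tourn_total hT hzv.symm with h' | h'
            · exact Or.inr h'
            · exact absurd h' (h y z hy hz)
  obtain ⟨a, b, ha1, ha2, ha3⟩ := harc
  have hva : v₀ ≠ a := fun h => hT.1 v₀ (h ▸ ha1)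
  have hab : a ≠ b := fun h => hT.1 a (h ▸ ha2)
  have hvb : v₀ ≠ b := fun h => hT.1 v₀ (h ▸ ha3)
  have hl₀ : IsCyc A [v₀, a, b] := by
    refine ⟨by simp, by simp [hva, hab, hvb], ?_, ?_⟩
    · exact isChain_cons_cons.mpr ⟨ha1, isChain_pair.mpr ha2⟩
    · intro x hx y hy
      simp only [getLast?, head?] at hx hy
      simp at hx hy
      rw [← hx, ← hy]
      exact ha3
  obtain ⟨l, hl, hllen⟩ := growCycle hT hstrong m hm3 (by rw [hn]; exact hmn)
    (m - 3) [v₀, a, b] hl₀ (by simp; omega)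
  set S₀ : Set V := {x | x ∈ l} with hS₀def
  have hS₀card : S₀.ncard = m := by rw [cyc_ncard hl, hllen]
  by_cases hgood₀ : ∀ z, z ∉ S₀ → {x | A x z} ≠ S₀
  · exact ⟨S₀, cyc_strong hl, hS₀card, key S₀ hS₀card hgood₀⟩
  push_neg at hgood₀
  obtain ⟨z₀, hz₀, hNz₀⟩ := hgood₀
  have hdom₀ : ∀ s ∈ S₀, A s z₀ := by
    intro s hs
    rw [← hNz₀] at hs
    exact hs
  have hbeat₀ : ∀ u, u ∉ S₀ → u ≠ z₀ → A z₀ u := by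
    intro u hu hne
    rcases tourn_total hT hne.symm with h | h
    · exact h
    · exact absurd (show u ∈ S₀ from hNz₀ ▸ h) hu
  have hysb : ∃ y sb, y ∉ S₀ ∧ y ≠ z₀ ∧ sb ∈ S₀ ∧ A y sb := by
    by_contra h
    push_neg at h
    refine no_sink hstrong (Y := S₀ᶜ) ⟨z₀, hz₀⟩
      ⟨l.head hl.ne_nil, by rw [compl_compl]; exact head_mem hl.ne_nil⟩ ?_
    intro u hu z hz hzS
    rcases eq_or_ne u z₀ with rfl | hne
    · exact tourn_asymm hT hz (hdom₀ z hzS)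
    · exact h u z hu hne hzS hz
  obtain ⟨y, sb, hyS₀, hyz₀, hsbS₀, hysbA⟩ := hysb
  have hz₀y : A z₀ y := hbeat₀ y hyS₀ hyz₀
  obtain ⟨t, hLcyc, hLperm⟩ := cyc_rotate hl (show sb ∈ l from hsbS₀)
  have hLmem : ∀ {x : V}, x ∈ sb :: t ↔ x ∈ S₀ := fun {x} => hLperm.mem_iff
  have hLlen : (sb :: t).length = m := by rw [hLperm.length_eq, hllen]
  have hdec : ∃ l₁ d₁ d₂, sb :: t = l₁ ++ [d₁, d₂] ∧ l₁ ≠ [] := by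
    rcases hrev : (sb :: t).reverse with _ | ⟨d₂, L2⟩
    · exfalso
      have := congrArg List.length hrev
      simp at this
    · rcases L2 with _ | ⟨d₁, r'⟩
      · exfalso
        have h1 := congrArg List.length hrev
        simp at h1
        have h2 := hLlen
        rw [h1] at h2
        simp at h2
        omega
      · refine ⟨r'.reverse, d₁, d₂, ?_, ?_⟩
        · have h2 := congrArg List.reverse hrev
          rw [reverse_reverse] at h2
          rw [h2]
          simp
        · have h1 := congrArg List.length hrev
          simp at h1
          have h2 := hLlen
          simp only [length_cons] at h2
          intro hc
          have hr' : r' = [] := by simpa using congrArg List.reverse hc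
          rw [hr'] at h1
          simp at h1
          omega
  obtain ⟨l₁, d₁, d₂, hdec, hl₁ne⟩ := hdec
  have hl₁len : l₁.length + 2 = m := by
    have := hLlen
    rw [hdec] at this
    simp at this
    omega
  have hchainL := hLcyc.2.2.1
  have hchainL' := hchainL
  rw [hdec] at hchainL'; unfold List.Chain' at hchainL'; rw [isChain_append] at hchainL'
  obtain ⟨hchain₁, hchainD, _⟩ := hchainL'
  have hd₁d₂ : A d₁ d₂ := isChain_pair.mp hchainD
  have hLne : sb :: t ≠ [] := by simp
  have hwrapL : A d₂ sb := by
    refine hLcyc.2.2.2 d₂ ?_ sb ?_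
    · rw [hdec, getLast?_append]
      simp
    · rfl
  have hheadl₁ : l₁.head hl₁ne = sb := by
    have h1 : (sb :: t).head? = some sb := rfl
    rw [hdec, head?_append, head?_eq_head hl₁ne] at h1
    simpa using h1
  have hl₁sub : ∀ x ∈ l₁, x ∈ S₀ := fun x hx =>
    hLmem.mp (by rw [hdec]; exact mem_append_left _ hx)
  have hd₁S₀ : d₁ ∈ S₀ := hLmem.mp (by rw [hdec]; simp)
  have hd₂S₀ : d₂ ∈ S₀ := hLmem.mp (by rw [hdec]; simp)
  have hndL := hLcyc.2.1
  rw [hdec, nodup_append, ← List.disjoint_iff_ne] at hndL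
  obtain ⟨hl₁nd, hDnd, hdisjD⟩ := hndL
  have hd₁l₁ : d₁ ∉ l₁ := fun h => hdisjD h (by simp)
  have hd₂l₁ : d₂ ∉ l₁ := fun h => hdisjD h (by simp)
  have hd₁d₂ne : d₁ ≠ d₂ := by
    intro h
    exact hT.1 d₁ (h ▸ hd₁d₂)
  -- first swap : S₁
  have hz₀l₁ : z₀ ∉ l₁ := fun h => hz₀ (hl₁sub _ h)
  have hyl₁ : y ∉ l₁ := fun h => hyS₀ (hl₁sub _ h)
  have hz₀yne : z₀ ≠ y := fun h => hT.1 z₀ (h ▸ hz₀y)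
  have hcyc₁ : IsCyc A (l₁ ++ [z₀, y]) := by
    refine cyc_build hl₁ne (by simp) ?_ ?_ hchain₁ (isChain_pair.mpr hz₀y) ?_ ?_
    · rw [nodup_append, ← List.disjoint_iff_ne]
      refine ⟨hl₁nd, by simp [hz₀yne], ?_⟩
      intro x hx hx'
      simp only [List.mem_cons, List.mem_singleton, List.not_mem_nil, or_false] at hx'
      rcases hx' with rfl | rfl
      · exact hz₀l₁ hx
      · exact hyl₁ hx
    · simp only [length_append, length_cons, length_nil]
      omega
    · exact hdom₀ _ (hl₁sub _ (getLast_mem hl₁ne))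
    · show A ([z₀, y].getLast (by simp)) (l₁.head hl₁ne)
      have : [z₀, y].getLast (by simp) = y := rfl
      rw [this, hheadl₁]
      exact hysbA
  set S₁ : Set V := {x | x ∈ l₁ ++ [z₀, y]} with hS₁def
  have hS₁card : S₁.ncard = m := by
    rw [cyc_ncard hcyc₁]
    simp only [length_append, length_cons, length_nil]
    omega
  have hS₁mem : ∀ {x : V}, x ∈ S₁ ↔ (x ∈ l₁ ∨ x = z₀ ∨ x = y) := by
    intro x
    simp [hS₁def]
  have hl₁S₁ : ∀ x ∈ l₁, x ∈ S₁ := fun x hx => hS₁mem.mpr (Or.inl hx)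
  have hz₀S₁ : z₀ ∈ S₁ := hS₁mem.mpr (Or.inr (Or.inl rfl))
  have hsbl₁ : sb ∈ l₁ := hheadl₁ ▸ head_mem hl₁ne
  have hsbS₁ : sb ∈ S₁ := hl₁S₁ _ hsbl₁
  by_cases hgood₁ : ∀ z, z ∉ S₁ → {x | A x z} ≠ S₁
  · exact ⟨S₁, cyc_strong hcyc₁, hS₁card, key S₁ hS₁card hgood₁⟩
  push_neg at hgood₁
  obtain ⟨z₁, hz₁, hNz₁⟩ := hgood₁
  have hdom₁ : ∀ s ∈ S₁, A s z₁ := by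
    intro s hs
    rw [← hNz₁] at hs
    exact hs
  have hbeat₁ : ∀ u, u ∉ S₁ → u ≠ z₁ → A z₁ u := by
    intro u hu hne
    rcases tourn_total hT hne.symm with h | h
    · exact h
    · exact absurd (show u ∈ S₁ from hNz₁ ▸ h) hu
  have hz₁d₂ne : z₁ ≠ d₂ := by
    intro h
    exact tourn_asymm hT hwrapL (h ▸ hdom₁ sb hsbS₁)
  have hz₁d₁ne : z₁ ≠ d₁ := by
    intro h
    exact tourn_asymm hT (hdom₀ d₁ hd₁S₀) (h ▸ hdom₁ z₀ hz₀S₁)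
  have hz₁S₀ : z₁ ∉ S₀ := by
    intro h
    have hmem : z₁ ∈ l₁ ++ [d₁, d₂] := by rw [← hdec]; exact hLmem.mpr h
    rw [mem_append] at hmem
    rcases hmem with hmem | hmem
    · exact hz₁ (hl₁S₁ _ hmem)
    · simp only [List.mem_cons, List.mem_singleton, List.not_mem_nil, or_false] at hmem
      rcases hmem with rfl | rfl
      · exact hz₁d₁ne rfl
      · exact hz₁d₂ne rfl
  have hz₁z₀ : z₁ ≠ z₀ := fun h => hz₁ (h ▸ hz₀S₁)
  have hz₀z₁ : A z₀ z₁ := hbeat₀ z₁ hz₁S₀ hz₁z₀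
  have hd₂S₁ : d₂ ∉ S₁ := by
    intro h
    rcases hS₁mem.mp h with h' | h' | h'
    · exact hd₂l₁ h'
    · exact hz₀ (h' ▸ hd₂S₀)
    · exact hyS₀ (h' ▸ hd₂S₀)
  have hz₁d₂ : A z₁ d₂ := hbeat₁ d₂ hd₂S₁ (fun h => hz₁d₂ne h.symm)
  -- second swap : S₂
  have hz₁l₁ : z₁ ∉ l₁ := fun h => hz₁S₀ (hl₁sub _ h)
  have hcyc₂ : IsCyc A (l₁ ++ [z₁, d₂]) := by
    refine cyc_build hl₁ne (by simp) ?_ ?_ hchain₁ (isChain_pair.mpr hz₁d₂) ?_ ?_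
    · rw [nodup_append, ← List.disjoint_iff_ne]
      refine ⟨hl₁nd, by simp [hz₁d₂ne], ?_⟩
      intro x hx hx'
      simp only [List.mem_cons, List.mem_singleton, List.not_mem_nil, or_false] at hx'
      rcases hx' with rfl | rfl
      · exact hz₁l₁ hx
      · exact hd₂l₁ hx
    · simp only [length_append, length_cons, length_nil]
      omega
    · exact hdom₁ _ (hl₁S₁ _ (getLast_mem hl₁ne))
    · show A ([z₁, d₂].getLast (by simp)) (l₁.head hl₁ne)
      have : [z₁, d₂].getLast (by simp) = d₂ := rfl
      rw [this, hheadl₁]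
      exact hwrapL
  set S₂ : Set V := {x | x ∈ l₁ ++ [z₁, d₂]} with hS₂def
  have hS₂card : S₂.ncard = m := by
    rw [cyc_ncard hcyc₂]
    simp only [length_append, length_cons, length_nil]
    omega
  have hS₂mem : ∀ {x : V}, x ∈ S₂ ↔ (x ∈ l₁ ∨ x = z₁ ∨ x = d₂) := by
    intro x
    simp [hS₂def]
  have hgood₂ : ∀ z, z ∉ S₂ → {x | A x z} ≠ S₂ := by
    intro z₂ hz₂ heq
    have hdom₂ : ∀ s ∈ S₂, A s z₂ := by
      intro s hs
      rw [← heq] at hs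
      exact hs
    have hz₁S₂ : z₁ ∈ S₂ := hS₂mem.mpr (Or.inr (Or.inl rfl))
    have hd₂S₂ : d₂ ∈ S₂ := hS₂mem.mpr (Or.inr (Or.inr rfl))
    have hz₂z₀ : z₂ ≠ z₀ := by
      intro h
      exact tourn_asymm hT hz₀z₁ (h ▸ hdom₂ z₁ hz₁S₂)
    have hz₂S₀ : z₂ ∉ S₀ := by
      intro h
      have hmem : z₂ ∈ l₁ ++ [d₁, d₂] := by rw [← hdec]; exact hLmem.mpr h
      rw [mem_append] at hmem
      rcases hmem with hmem | hmem
      · exact hz₂ (hS₂mem.mpr (Or.inl hmem))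
      · simp only [List.mem_cons, List.mem_singleton, List.not_mem_nil, or_false] at hmem
        rcases hmem with rfl | rfl
        · exact tourn_asymm hT hd₁d₂ (hdom₂ d₂ hd₂S₂)
        · exact hz₂ hd₂S₂
    have hz₀z₂ : A z₀ z₂ := hbeat₀ z₂ hz₂S₀ hz₂z₀
    have hz₀S₂ : z₀ ∈ S₂ := by
      rw [← heq]
      exact hz₀z₂
    rcases hS₂mem.mp hz₀S₂ with h' | h' | h'
    · exact hz₀ (hl₁sub _ h')
    · exact hz₁z₀ h'.symm
    · exact hz₀ (h' ▸ hd₂S₀)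
  exact ⟨S₂, cyc_strong hcyc₂, hS₂card, key S₂ hS₂card hgood₂⟩

end Chunk7


theorem stmt15 [Fintype V] (A : V → V → Prop) (n k : ℕ)
    (hcard : Fintype.card V = n) (hk : 3 ≤ k) (hn : 3 * k ≤ n)
    (hT : IsTournament A) (h1 : KStrong A k) (h2 : ¬ KStrong A (k + 1)) :
    ∃ S : Set V, StrongSafeSet A S ∧ S.ncard ≤ (n + 1) / 2 := by
  classical
  have hstrong : StrongIn A Set.univ := by
    have h := h1.2 ∅ (by rw [Set.ncard_empty]; omega)
    rwa [Set.compl_empty] at h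
  set m := (n + 1) / 2 with hm
  have hn9 : 9 ≤ n := by omega
  have hm3 : 3 ≤ m := by omega
  have hmn : m ≤ n := by omega
  have hnm : n - m ≤ m := by omega
  by_cases hbig : ∃ w : V, m + 1 ≤ ({x | A x w}).ncard
  · obtain ⟨w, hw⟩ := hbig
    obtain ⟨S, hS, hScard, habs⟩ := caseB hT hstrong hcard hm3 hmn
      (show n + 1 - m ≤ ({x | A x w}).ncard by omega)
    exact ⟨S, assemble hT hcard hS hScard (by omega) hnm habs, le_of_eq hScard⟩
  · push_neg at hbig
    obtain ⟨S, hS, hScard, habs⟩ := caseC hT hstrong hcard hm3 hmn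
      (fun v => by have := hbig v; omega)
    exact ⟨S, assemble hT hcard hS hScard (by omega) hnm habs, le_of_eq hScard⟩
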